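/- arXiv:2204.09576 — 4 statements merged into one kernel-verified Lean document; each statement's English description precedes it below -/
import Mathlib

section
/- Matrix mutation preserves the rank: for any (n+m)×n integer matrix B̃ whose top n×n submatrix is skew-symmetrizable and any k ∈ {1,…,n}, the rank of μ_k(B̃) (as a matrix over ℚ) equals the rank of B̃. -/
/-- Mutation of an `(n+m) × n` integer matrix at direction `k`. -/
def mutate (n m : ℕ) (B : Matrix (Fin (n + m)) (Fin n) ℤ) (k : Fin n) :
    Matrix (Fin (n + m)) (Fin n) ℤ :=
  fun i j =>
    if i = Fin.castAdd m k ∨ j = k then -B i j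
    else B i j + Int.sign (B i k) * max (B i k * B (Fin.castAdd m k) j) 0

/-- A square integer matrix is skew-symmetrizable if there is a diagonal matrix with
positive integer entries `S` such that `S * B` is skew-symmetric. -/
def IsSkewSymmetrizable (n : ℕ) (B : Matrix (Fin n) (Fin n) ℤ) : Prop :=
  ∃ S : Fin n → ℤ, (∀ i, 0 < S i) ∧ ∀ i j, S i * B i j = -(S j * B j i)

lemma sign_max_identity (a b : ℤ) :
    Int.sign a * max (a * b) 0 = max a 0 * b + a * max (-b) 0 := by
  rcases lt_trichotomy a 0 with ha | ha | ha <;>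
    rcases le_or_gt b 0 with hb | hb
  · rw [Int.sign_eq_neg_one_of_neg ha,
      max_eq_left (by nlinarith : (0:ℤ) ≤ a * b),
      max_eq_right ha.le, max_eq_left (neg_nonneg.mpr hb)]
    ring
  · rw [Int.sign_eq_neg_one_of_neg ha,
      max_eq_right (mul_nonpos_of_nonpos_of_nonneg ha.le hb.le),
      max_eq_right ha.le, max_eq_right (neg_nonpos.mpr hb.le)]
    ring
  · subst ha; simp
  · subst ha; simp
  · rw [Int.sign_eq_one_of_pos ha,
      max_eq_right (mul_nonpos_of_nonneg_of_nonpos ha.le hb),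
      max_eq_left ha.le, max_eq_left (neg_nonneg.mpr hb)]
    ring
  · rw [Int.sign_eq_one_of_pos ha,
      max_eq_left (mul_nonneg ha.le hb.le),
      max_eq_left ha.le, max_eq_right (neg_nonpos.mpr hb.le)]
    ring

theorem mutate_rank (n m : ℕ) (B : Matrix (Fin (n + m)) (Fin n) ℤ) (k : Fin n)
    (h : IsSkewSymmetrizable n (fun i j => B (Fin.castAdd m i) j)) :
    ((mutate n m B k).map (Int.cast : ℤ → ℚ)).rank = (B.map (Int.cast : ℤ → ℚ)).rank := by
  -- The diagonal entry at k vanishes.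
  have hBkk : B (Fin.castAdd m k) k = 0 := by
    obtain ⟨S, hSpos, hS⟩ := h
    have h1 : S k * B (Fin.castAdd m k) k = -(S k * B (Fin.castAdd m k) k) := hS k k
    have h2 : S k * B (Fin.castAdd m k) k = 0 := by linarith
    rcases mul_eq_zero.mp h2 with h' | h'
    · exact absurd h' (hSpos k).ne'
    · exact h'
  set w : Fin (n + m) → ℚ :=
    fun i => if i = Fin.castAdd m k then -2 else max (B i k : ℚ) 0 with hw
  set u : Fin n → ℚ :=
    fun j => if j = k then -2 else max (-(B (Fin.castAdd m k) j : ℚ)) 0 with hu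
  set E : Matrix (Fin (n + m)) (Fin (n + m)) ℚ :=
    1 + Matrix.of (fun i p => if p = Fin.castAdd m k then w i else 0) with hE
  set F : Matrix (Fin n) (Fin n) ℚ :=
    1 + Matrix.of (fun p j => if p = k then u j else 0) with hF
  have hwK : w (Fin.castAdd m k) = -2 := by simp [hw]
  have huk : u k = -2 := by simp [hu]
  -- E and F are involutions
  have hEsq : E * E = 1 := by
    ext i j
    simp only [hE, Matrix.mul_apply, Matrix.add_apply, Matrix.of_apply, Matrix.one_apply,
      add_mul, mul_add, ite_mul, mul_ite, zero_mul, mul_zero, one_mul, mul_one,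
      Finset.sum_add_distrib, Finset.sum_ite_eq, Finset.sum_ite_eq', Finset.mem_univ, if_true]
    by_cases hj : j = Fin.castAdd m k
    · subst hj
      by_cases hij : i = Fin.castAdd m k <;>
        simp [hij, hwK, Finset.sum_add_distrib] <;> ring
    · simp [hj]
  have hFsq : F * F = 1 := by
    ext i j
    simp only [hF, Matrix.mul_apply, Matrix.add_apply, Matrix.of_apply, Matrix.one_apply,
      add_mul, mul_add, ite_mul, mul_ite, zero_mul, mul_zero, one_mul, mul_one,
      Finset.sum_add_distrib, Finset.sum_ite_eq, Finset.sum_ite_eq', Finset.mem_univ, if_true]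
    by_cases hi : i = k
    · by_cases hij : j = k <;>
        simp [hi, hij, huk, Finset.sum_add_distrib] <;> ring
    · simp [hi]
  have hEdet : IsUnit E.det := by
    apply IsUnit.of_mul_eq_one E.det
    rw [← Matrix.det_mul, hEsq, Matrix.det_one]
  have hFdet : IsUnit F.det := by
    apply IsUnit.of_mul_eq_one F.det
    rw [← Matrix.det_mul, hFsq, Matrix.det_one]
  -- The key factorization
  have hEB : ∀ (i : Fin (n+m)) (j : Fin n),
      (E * B.map (Int.cast : ℤ → ℚ)) i j
        = (B i j : ℚ) + w i * (B (Fin.castAdd m k) j : ℚ) := by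
    intro i j
    simp [hE, Matrix.mul_apply, Matrix.add_apply, Matrix.of_apply, Matrix.one_apply,
      ite_mul, zero_mul, one_mul, add_mul, Finset.sum_add_distrib]
  have key : (mutate n m B k).map (Int.cast : ℤ → ℚ) =
      E * (B.map (Int.cast : ℤ → ℚ)) * F := by
    ext i j
    have hrow : (E * B.map (Int.cast : ℤ → ℚ) * F) i j =
        (E * B.map (Int.cast : ℤ → ℚ)) i j + (E * B.map (Int.cast : ℤ → ℚ)) i k * u j := by
      simp [hF, Matrix.mul_apply, Matrix.add_apply, Matrix.of_apply, Matrix.one_apply,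
        mul_ite, mul_zero, mul_one, mul_add, Finset.sum_add_distrib, Matrix.mul_apply (M := E)]
    rw [hrow, hEB, hEB, hBkk]
    simp only [Int.cast_zero, mul_zero, add_zero]
    show ((mutate n m B k i j : ℤ) : ℚ) = _
    unfold mutate
    by_cases hi : i = Fin.castAdd m k
    · subst hi
      rw [if_pos (Or.inl rfl), hwK, hBkk]
      push_cast
      ring
    · by_cases hj : j = k
      · subst hj
        rw [if_pos (Or.inr rfl), huk, hBkk]
        simp only [hw, if_neg hi]
        push_cast
        ring
      · rw [if_neg (by tauto)]
        simp only [hw, hu, if_neg hi, if_neg hj]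
        have hcast := congrArg (Int.cast : ℤ → ℚ)
          (sign_max_identity (B i k) (B (Fin.castAdd m k) j))
        push_cast at hcast ⊢
        rw [hcast]
        ring
  rw [key, Matrix.rank_mul_eq_left_of_isUnit_det _ _ hFdet,
    Matrix.rank_mul_eq_right_of_isUnit_det _ _ hEdet]
end

section
/- Matrix mutation preserves column primitivity: if every column of the (n+m)×n integer matrix B̃ (with skew-symmetrizable top n×n submatrix) is a primitive integer vector, then every column of μ_k(B̃) is a primitive integer vector, for any k ∈ {1,…,n}. -/
theorem mutate_primitive (n m : ℕ) (B : Matrix (Fin (n + m)) (Fin n) ℤ) (k : Fin n)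
    (h : IsSkewSymmetrizable n (fun i j => B (Fin.castAdd m i) j))
    (hprim : ∀ j : Fin n, Finset.univ.gcd (fun i => B i j) = 1) :
    ∀ j : Fin n, Finset.univ.gcd (fun i => mutate n m B k i j) = 1 := by
  intro j
  set d : ℤ := Finset.univ.gcd (fun i => mutate n m B k i j) with hd
  have hdvd : ∀ i : Fin (n + m), d ∣ mutate n m B k i j := fun i =>
    Finset.gcd_dvd (Finset.mem_univ i)
  -- d divides c := B (castAdd m k) j
  have hc : d ∣ B (Fin.castAdd m k) j := by
    have := hdvd (Fin.castAdd m k)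
    simp only [mutate, if_pos (Or.inl rfl)] at this
    exact (dvd_neg).mp this
  -- d divides every original entry
  have hold : ∀ i : Fin (n + m), d ∣ B i j := by
    intro i
    have hi := hdvd i
    by_cases hcase : i = Fin.castAdd m k ∨ j = k
    · simp only [mutate, if_pos hcase] at hi
      exact (dvd_neg).mp hi
    · simp only [mutate, if_neg hcase] at hi
      have hterm : d ∣ Int.sign (B i k) * max (B i k * B (Fin.castAdd m k) j) 0 := by
        apply Dvd.dvd.mul_left
        rcases max_choice (B i k * B (Fin.castAdd m k) j) 0 with hmax | hmax
        · rw [hmax]; exact Dvd.dvd.mul_left hc _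
        · rw [hmax]; exact dvd_zero d
      have := (dvd_add_right hterm).mp (by rwa [add_comm] at hi)
      exact this
  have hdone : d ∣ 1 := by
    rw [← hprim j]
    exact Finset.dvd_gcd fun i _ => hold i
  rw [hd, ← Finset.normalize_gcd]
  exact normalize_eq_one.mpr (isUnit_of_dvd_one hdone)
end

section
/- Irreducibility of primitive binomials with disjoint support: let K be a field and let a = (a_1,…,a_n), b = (b_1,…,b_n) be vectors of non-negative integers with disjoint supports (a_i·b_i = 0 for all i) such that gcd(a_1,…,a_n,b_1,…,b_n) = 1 and (a,b) ≠ 0. Then the binomial ∏_i x_i^{a_i} + ∏_i x_i^{b_i} is irreducible in the polynomial ring K[x_1,…,x_n]. -/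
open MvPolynomial

set_option maxHeartbeats 1000000
set_option synthInstance.maxHeartbeats 400000

noncomputable section BinomAux

variable (K : Type*) [Field K]

/-- The pivot equivalence: single out variable `ℓ`. -/
def phiAux {σ : Type*} [Fintype σ] [DecidableEq σ] (ℓ : σ) :
    MvPolynomial σ K ≃ₐ[K] Polynomial (MvPolynomial {k : σ // k ≠ ℓ} K) :=
  (renameEquiv K (Equiv.optionSubtypeNe ℓ).symm).trans (optionEquivLeft K {k : σ // k ≠ ℓ})

variable {σ : Type*} [Fintype σ] [DecidableEq σ]

lemma phiAux_X_pivot (ℓ : σ) : phiAux K ℓ (X ℓ) = Polynomial.X := by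
  simp [phiAux, renameEquiv, rename_X, Equiv.optionSubtypeNe_symm_self, optionEquivLeft_X_none]

lemma phiAux_X_ne (ℓ : σ) (s : {k : σ // k ≠ ℓ}) :
    phiAux K ℓ (X s.val) = Polynomial.C (X s) := by
  simp [phiAux, renameEquiv, rename_X, Equiv.optionSubtypeNe_symm_of_ne s.2,
    optionEquivLeft_X_some]

lemma phiAux_prod (ℓ : σ) (c : σ → ℕ) :
    phiAux K ℓ (∏ k, X k ^ c k) =
      Polynomial.X ^ c ℓ * Polynomial.C (∏ s : {k : σ // k ≠ ℓ}, X s ^ c s.val) := by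
  have h : (∏ k, X k ^ c k : MvPolynomial σ K)
      = X ℓ ^ c ℓ * ∏ s : {k : σ // k ≠ ℓ}, X (s : σ) ^ c s := by
    rw [← Equiv.prod_comp (Equiv.optionSubtypeNe ℓ)
      (fun k => (X k : MvPolynomial σ K) ^ c k), Fintype.prod_option]
    simp
  rw [h, map_mul, map_pow, map_prod, phiAux_X_pivot]
  congr 1
  simp [phiAux_X_ne, map_prod, map_pow]

lemma prime_X_mv (s : σ) : Prime (X s : MvPolynomial σ K) := by
  rw [← MulEquiv.prime_iff (M := MvPolynomial σ K)
    (N := Polynomial (MvPolynomial {k : σ // k ≠ s} K)) (phiAux K s)]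
  show Prime ((phiAux K s) (X s))
  rw [phiAux_X_pivot]
  exact Polynomial.prime_X

/-- Coprimality of monomials with disjoint supports. -/
lemma coprime_monomials (a b : σ → ℕ) (hdisj : ∀ i, a i * b i = 0)
    {r : MvPolynomial σ K} (hra : r ∣ ∏ u, X u ^ a u) (hrb : r ∣ ∏ u, X u ^ b u) :
    IsUnit r := by
  by_contra hr
  have hA : (∏ u, X u ^ a u : MvPolynomial σ K) ≠ 0 :=
    Finset.prod_ne_zero_iff.mpr fun u _ => pow_ne_zero _ (X_ne_zero u)
  have hr0 : r ≠ 0 := by rintro rfl; exact hA (zero_dvd_iff.mp hra)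
  obtain ⟨π, hπi, hπr⟩ := WfDvdMonoid.exists_irreducible_factor hr hr0
  have hπ : Prime π := UniqueFactorizationMonoid.irreducible_iff_prime.mp hπi
  obtain ⟨s, -, hs⟩ := hπ.exists_mem_finset_dvd (hπr.trans hra)
  have has : a s ≠ 0 := by
    rintro h; rw [h, pow_zero] at hs; exact hπ.not_unit (isUnit_of_dvd_one hs)
  have hπX : π ∣ X s := hπ.dvd_of_dvd_pow hs
  obtain ⟨t, -, ht⟩ := hπ.exists_mem_finset_dvd (hπr.trans hrb)
  have hbt : b t ≠ 0 := by
    rintro h; rw [h, pow_zero] at ht; exact hπ.not_unit (isUnit_of_dvd_one ht)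
  have hπXt : π ∣ X t := hπ.dvd_of_dvd_pow ht
  have hst : t ≠ s := by
    rintro rfl
    have := hdisj t
    rcases Nat.mul_eq_zero.mp this with h | h
    exacts [has h, hbt h]
  have hXst : (X s : MvPolynomial σ K) ∣ X t :=
    ((hπ.associated_of_dvd (prime_X_mv K s) hπX).symm.dvd).trans hπXt
  obtain ⟨h, hh⟩ := hXst
  have := congrArg (eval (fun u : σ => if u = s then (0 : K) else 1)) hh
  simp [if_neg hst] at this

lemma intDegree_pow {L : Type*} [Field L] {x : RatFunc L} (hx : x ≠ 0) (m : ℕ) :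
    (x ^ m).intDegree = m * x.intDegree := by
  induction m with
  | zero => simp [RatFunc.intDegree_one]
  | succ k ih =>
      rw [pow_succ, RatFunc.intDegree_mul (pow_ne_zero _ hx) hx, ih]
      push_cast; ring

/-- The `s`-degree homomorphism. -/
def theta (s : σ) :
    MvPolynomial σ K →+* RatFunc (FractionRing (MvPolynomial {k : σ // k ≠ s} K)) :=
  ((algebraMap (Polynomial (FractionRing (MvPolynomial {k : σ // k ≠ s} K)))
      (RatFunc (FractionRing (MvPolynomial {k : σ // k ≠ s} K)))).comp
    (Polynomial.mapRingHom (algebraMap (MvPolynomial {k : σ // k ≠ s} K)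
      (FractionRing (MvPolynomial {k : σ // k ≠ s} K))))).comp
    (phiAux K s).toAlgHom.toRingHom

lemma theta_injective (s : σ) : Function.Injective (theta K s) := by
  intro x y hxy
  apply (phiAux K s).injective
  apply Polynomial.map_injective (algebraMap (MvPolynomial {k : σ // k ≠ s} K)
    (FractionRing (MvPolynomial {k : σ // k ≠ s} K)))
    (IsFractionRing.injective (MvPolynomial {k : σ // k ≠ s} K)
      (FractionRing (MvPolynomial {k : σ // k ≠ s} K)))
  apply RatFunc.algebraMap_injective
  exact hxy

lemma theta_spec (s : σ) (c : σ → ℕ) :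
    theta K s (∏ u, X u ^ c u) ≠ 0 ∧
      (theta K s (∏ u, X u ^ c u)).intDegree = (c s : ℤ) := by
  have h1 : phiAux K s (∏ u, X u ^ c u) =
      Polynomial.X ^ c s * Polynomial.C (∏ t : {k : σ // k ≠ s}, X t ^ c t.val) :=
    phiAux_prod K s c
  have h2 : theta K s (∏ u, X u ^ c u)
      = RatFunc.X ^ c s * RatFunc.C (algebraMap (MvPolynomial {k : σ // k ≠ s} K) _
          (∏ t : {k : σ // k ≠ s}, X t ^ c t.val)) := by
    have hrfl : theta K s (∏ u, X u ^ c u)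
        = (algebraMap (Polynomial (FractionRing (MvPolynomial {k : σ // k ≠ s} K)))
            (RatFunc (FractionRing (MvPolynomial {k : σ // k ≠ s} K))))
          ((phiAux K s (∏ u, X u ^ c u)).map (algebraMap (MvPolynomial {k : σ // k ≠ s} K)
            (FractionRing (MvPolynomial {k : σ // k ≠ s} K)))) := rfl
    rw [hrfl, h1]
    simp only [Polynomial.map_mul, Polynomial.map_pow, Polynomial.map_X, Polynomial.map_C,
      map_mul, map_pow, RatFunc.algebraMap_X, RatFunc.algebraMap_C]
  have hM : (∏ t : {k : σ // k ≠ s}, X t ^ c t.val : MvPolynomial {k : σ // k ≠ s} K) ≠ 0 :=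
    Finset.prod_ne_zero_iff.mpr fun u _ => pow_ne_zero _ (X_ne_zero u)
  have hM' : (algebraMap (MvPolynomial {k : σ // k ≠ s} K)
      (FractionRing (MvPolynomial {k : σ // k ≠ s} K))) (∏ t : {k : σ // k ≠ s}, X t ^ c t.val)
      ≠ 0 := fun h => hM (IsFractionRing.injective _ _ (by rw [h, map_zero]))
  have hC : RatFunc.C ((algebraMap (MvPolynomial {k : σ // k ≠ s} K)
      (FractionRing (MvPolynomial {k : σ // k ≠ s} K)))
      (∏ t : {k : σ // k ≠ s}, X t ^ c t.val)) ≠ 0 :=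
    fun h => hM' (RatFunc.C.injective (by rw [h, map_zero]))
  constructor
  · rw [h2]
    exact mul_ne_zero (pow_ne_zero _ RatFunc.X_ne_zero) hC
  · rw [h2, RatFunc.intDegree_mul (pow_ne_zero _ RatFunc.X_ne_zero) hC,
      intDegree_pow RatFunc.X_ne_zero, RatFunc.intDegree_X, RatFunc.intDegree_C]
    ring

lemma dvd_of_pow_eq (a b : σ → ℕ) {p : ℕ} (hp : p ≠ 0)
    {t : FractionRing (MvPolynomial σ K)}
    (ht : t ^ p * algebraMap (MvPolynomial σ K) (FractionRing (MvPolynomial σ K))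
        (∏ u, X u ^ a u)
      = - algebraMap (MvPolynomial σ K) (FractionRing (MvPolynomial σ K)) (∏ u, X u ^ b u))
    (s : σ) :
    (p : ℤ) ∣ (b s : ℤ) - (a s : ℤ) := by
  obtain ⟨hA0, hAdeg⟩ := theta_spec K s a
  obtain ⟨hB0, hBdeg⟩ := theta_spec K s b
  set Ψ : FractionRing (MvPolynomial σ K) →+* _ :=
    IsFractionRing.lift (K := FractionRing (MvPolynomial σ K)) (theta_injective K s) with hΨdef
  have hΨ := congrArg Ψ ht
  rw [map_mul, map_pow, map_neg, IsFractionRing.lift_algebraMap,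
    IsFractionRing.lift_algebraMap] at hΨ
  have hΨt : Ψ t ≠ 0 := by
    intro h
    rw [h, zero_pow hp, zero_mul] at hΨ
    exact hB0 (neg_eq_zero.mp hΨ.symm)
  have hdeg := congrArg RatFunc.intDegree hΨ
  rw [RatFunc.intDegree_mul (pow_ne_zero _ hΨt) hA0, intDegree_pow hΨt,
    RatFunc.intDegree_neg, hAdeg, hBdeg] at hdeg
  exact ⟨(Ψ t).intDegree, by linarith⟩

theorem key (a b : σ → ℕ) (hdisj : ∀ i, a i * b i = 0) (ℓ : σ) (hodd : Odd (a ℓ))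
    (hgcd1 : ∀ p : ℕ, p.Prime → (∀ k, p ∣ a k) → (∀ k, p ∣ b k) → False) :
    Irreducible ((∏ i, X i ^ a i) + (∏ i, X i ^ b i) : MvPolynomial σ K) := by
  have haℓ : a ℓ ≠ 0 := hodd.pos.ne'
  have hbℓ : b ℓ = 0 := by
    rcases Nat.mul_eq_zero.mp (hdisj ℓ) with h | h
    · exact absurd h haℓ
    · exact h
  rw [← MulEquiv.irreducible_iff (M := MvPolynomial σ K)
      (N := Polynomial (MvPolynomial {k : σ // k ≠ ℓ} K)) (phiAux K ℓ)]
  show Irreducible ((phiAux K ℓ) ((∏ i, X i ^ a i) + (∏ i, X i ^ b i)))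
  rw [map_add, phiAux_prod K ℓ a, phiAux_prod K ℓ b, hbℓ, pow_zero, one_mul]
  set S := {k : σ // k ≠ ℓ} with hSdef
  set A : MvPolynomial S K := ∏ s : S, X s ^ a s.val with hAdef
  set B : MvPolynomial S K := ∏ s : S, X s ^ b s.val with hBdef
  have hA0 : A ≠ 0 := Finset.prod_ne_zero_iff.mpr fun u _ => pow_ne_zero _ (X_ne_zero u)
  have hB0 : B ≠ 0 := Finset.prod_ne_zero_iff.mpr fun u _ => pow_ne_zero _ (X_ne_zero u)
  set F := FractionRing (MvPolynomial S K) with hFdef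
  set i : MvPolynomial S K →+* F := algebraMap _ _ with hidef
  have hinj : Function.Injective i := IsFractionRing.injective _ _
  have hiA : i A ≠ 0 := fun h => hA0 (hinj (by rw [h, map_zero]))
  have hiB : i B ≠ 0 := fun h => hB0 (hinj (by rw [h, map_zero]))
  set c : F := -(i B / i A) with hcdef
  have hKummer : Irreducible (Polynomial.X ^ a ℓ - Polynomial.C c) := by
    apply X_pow_sub_C_irreducible_of_odd hodd
    intro p hp hpd t ht
    have ht' : t ^ p * i A = - i B := by
      rw [ht, hcdef, neg_mul, div_mul_cancel₀ _ hiA]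
    have hdvd : ∀ s : S, (p : ℤ) ∣ (b s.val : ℤ) - (a s.val : ℤ) := fun s =>
      dvd_of_pow_eq K (fun u : S => a u.val) (fun u : S => b u.val) hp.ne_zero ht' s
    have hall : ∀ k, p ∣ a k ∧ p ∣ b k := by
      intro k
      by_cases hk : k = ℓ
      · subst hk
        exact ⟨hpd, hbℓ ▸ dvd_zero p⟩
      · have h := hdvd ⟨k, hk⟩
        rcases Nat.mul_eq_zero.mp (hdisj k) with h0 | h0
        · refine ⟨h0 ▸ dvd_zero p, ?_⟩
          rw [h0, Nat.cast_zero, sub_zero] at h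
          exact_mod_cast h
        · refine ⟨?_, h0 ▸ dvd_zero p⟩
          rw [h0, Nat.cast_zero, zero_sub, dvd_neg] at h
          exact_mod_cast h
    exact hgcd1 p hp (fun k => (hall k).1) (fun k => (hall k).2)
  set G : Polynomial (MvPolynomial S K) :=
    Polynomial.X ^ a ℓ * Polynomial.C A + Polynomial.C B with hGdef
  have hmapG : G.map i = (Polynomial.X ^ a ℓ - Polynomial.C c) * Polynomial.C (i A) := by
    have hciA : c * i A = - i B := by rw [hcdef, neg_mul, div_mul_cancel₀ _ hiA]
    rw [hGdef, Polynomial.map_add, Polynomial.map_mul, Polynomial.map_pow, Polynomial.map_X,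
      Polynomial.map_C, Polynomial.map_C, sub_mul, ← Polynomial.C_mul, hciA, Polynomial.C_neg,
      sub_neg_eq_add]
  have huA : IsUnit (Polynomial.C (i A)) := Polynomial.isUnit_C.mpr (isUnit_iff_ne_zero.mpr hiA)
  have hirrF : Irreducible (G.map i) := by
    rw [hmapG]
    have hassoc : Associated (Polynomial.X ^ a ℓ - Polynomial.C c)
        ((Polynomial.X ^ a ℓ - Polynomial.C c) * Polynomial.C (i A)) :=
      ⟨huA.unit, by rw [IsUnit.unit_spec]⟩
    exact hassoc.irreducible hKummer
  have hGA : G.coeff (a ℓ) = A := by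
    rw [hGdef, Polynomial.coeff_add, Polynomial.coeff_mul_C, Polynomial.coeff_X_pow_self,
      one_mul, Polynomial.coeff_C, if_neg haℓ, add_zero]
  have hGB : G.coeff 0 = B := by
    rw [hGdef, Polynomial.coeff_add, Polynomial.coeff_mul_C, Polynomial.coeff_X_pow,
      if_neg (Ne.symm haℓ), zero_mul, zero_add, Polynomial.coeff_C, if_pos rfl]
  have unit_of : ∀ w : Polynomial (MvPolynomial S K), w ∣ G → IsUnit (w.map i) → IsUnit w := by
    intro w hw hwu
    have hdeg : w.degree = 0 := by
      rw [← Polynomial.degree_map_eq_of_injective hinj w]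
      exact Polynomial.degree_eq_zero_of_isUnit hwu
    have hwC : w = Polynomial.C (w.coeff 0) := Polynomial.eq_C_of_degree_le_zero hdeg.le
    rw [hwC, Polynomial.isUnit_C]
    have hcoeff := (Polynomial.C_dvd_iff_dvd_coeff (w.coeff 0) G).mp (hwC ▸ hw)
    have hrA : w.coeff 0 ∣ A := hGA ▸ hcoeff (a ℓ)
    have hrB : w.coeff 0 ∣ B := hGB ▸ hcoeff 0
    exact coprime_monomials K (fun u : S => a u.val) (fun u : S => b u.val)
      (fun u => hdisj u.val) hrA hrB
  constructor
  · intro hu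
    exact hirrF.not_isUnit (by simpa using hu.map (Polynomial.mapRingHom i))
  · intro u v huv
    have hmul : (u.map i) * (v.map i) = G.map i := by rw [← Polynomial.map_mul, ← huv]
    rcases hirrF.isUnit_or_isUnit hmul.symm with h | h
    · exact Or.inl (unit_of u ⟨v, huv⟩ h)
    · exact Or.inr (unit_of v ⟨u, by rw [huv, mul_comm]⟩ h)

end BinomAux

theorem binomial_irreducible (K : Type*) [Field K] (n : ℕ) (a b : Fin n → ℕ)
    (hdisj : ∀ i, a i * b i = 0)
    (hgcd : Nat.gcd (Finset.univ.gcd a) (Finset.univ.gcd b) = 1)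
    (hne : ¬(a = 0 ∧ b = 0)) :
    Irreducible ((∏ i, X i ^ a i) + (∏ i, X i ^ b i) : MvPolynomial (Fin n) K) := by
  have hgcd1 : ∀ p : ℕ, p.Prime → (∀ k, p ∣ a k) → (∀ k, p ∣ b k) → False := by
    intro p hp hpa hpb
    have h : p ∣ Nat.gcd (Finset.univ.gcd a) (Finset.univ.gcd b) :=
      Nat.dvd_gcd (Finset.dvd_gcd fun k _ => hpa k) (Finset.dvd_gcd fun k _ => hpb k)
    rw [hgcd] at h
    exact hp.one_lt.ne' (Nat.dvd_one.mp h)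
  have hex : ∃ ℓ, Odd (a ℓ) ∨ Odd (b ℓ) := by
    by_contra hcon
    push_neg at hcon
    refine hgcd1 2 Nat.prime_two (fun k => ?_) (fun k => ?_)
    · exact (Nat.not_odd_iff_even.mp ((hcon k).1)).two_dvd
    · exact (Nat.not_odd_iff_even.mp ((hcon k).2)).two_dvd
  obtain ⟨ℓ, hodd | hodd⟩ := hex
  · exact key K a b hdisj ℓ hodd hgcd1
  · rw [add_comm]
    exact key K b a (fun i => by rw [mul_comm]; exact hdisj i) ℓ hodd
      (fun p hp hpb hpa => hgcd1 p hp hpa hpb)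
end

section
/- The units of a multivariate Laurent polynomial ring over a field are exactly the nonzero scalar multiples of Laurent monomials: an element f of K[x_1^{±1},…,x_n^{±1}] is a unit if and only if f = λ·x_1^{c_1}⋯x_n^{c_n} for some λ ∈ K^× and integers c_1,…,c_n. -/
open AddMonoidAlgebra

lemma laurent_mul_apply_max {K A : Type*} [Field K] [AddCommGroup A] [LinearOrder A] [IsOrderedAddMonoid A]
    (p q : AddMonoidAlgebra K A) (hp : p.coeff.support.Nonempty) (hq : q.coeff.support.Nonempty) :
    (p * q).coeff (p.coeff.support.max' hp + q.coeff.support.max' hq) =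
      p.coeff (p.coeff.support.max' hp) * q.coeff (q.coeff.support.max' hq) := by
  classical
  rw [AddMonoidAlgebra.mul_apply]
  rw [Finsupp.sum, Finset.sum_eq_single (p.coeff.support.max' hp)]
  · rw [Finsupp.sum, Finset.sum_eq_single (q.coeff.support.max' hq), if_pos rfl]
    · intro b hb hne
      exact if_neg fun he => hne (add_left_cancel he)
    · intro h; exact absurd (q.coeff.support.max'_mem hq) h
  · intro a ha hne
    refine Finset.sum_eq_zero fun b hb => if_neg fun he => ?_
    exact (add_lt_add_of_lt_of_le ((Finset.le_max' _ a ha).lt_of_ne hne)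
      (Finset.le_max' _ b hb)).ne he
  · intro h; exact absurd (p.coeff.support.max'_mem hp) h

lemma laurent_mul_apply_min {K A : Type*} [Field K] [AddCommGroup A] [LinearOrder A] [IsOrderedAddMonoid A]
    (p q : AddMonoidAlgebra K A) (hp : p.coeff.support.Nonempty) (hq : q.coeff.support.Nonempty) :
    (p * q).coeff (p.coeff.support.min' hp + q.coeff.support.min' hq) =
      p.coeff (p.coeff.support.min' hp) * q.coeff (q.coeff.support.min' hq) := by
  classical
  rw [AddMonoidAlgebra.mul_apply]
  rw [Finsupp.sum, Finset.sum_eq_single (p.coeff.support.min' hp)]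
  · rw [Finsupp.sum, Finset.sum_eq_single (q.coeff.support.min' hq), if_pos rfl]
    · intro b hb hne
      exact if_neg fun he => hne (add_left_cancel he)
    · intro h; exact absurd (q.coeff.support.min'_mem hq) h
  · intro a ha hne
    refine Finset.sum_eq_zero fun b hb => if_neg fun he => ?_
    exact (add_lt_add_of_lt_of_le ((Finset.min'_le _ a ha).lt_of_ne hne.symm)
      (Finset.min'_le _ b hb)).ne' he
  · intro h; exact absurd (p.coeff.support.min'_mem hp) h

lemma laurent_isUnit_iff_single {K A : Type*} [Field K] [AddCommGroup A] [LinearOrder A] [IsOrderedAddMonoid A]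
    (f : AddMonoidAlgebra K A) :
    IsUnit f ↔ ∃ (lam : Kˣ) (c : A), f = AddMonoidAlgebra.single c (lam : K) := by
  constructor
  · rintro ⟨u, rfl⟩
    set p : AddMonoidAlgebra K A := (u : AddMonoidAlgebra K A) with hpdef
    set q : AddMonoidAlgebra K A := ((u⁻¹ : (AddMonoidAlgebra K A)ˣ) : AddMonoidAlgebra K A)
      with hqdef
    have hmul : p * q = 1 := u.mul_inv
    have hp0 : p ≠ 0 := by
      intro h
      rw [h, zero_mul] at hmul
      exact one_ne_zero hmul.symm
    have hq0 : q ≠ 0 := by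
      intro h
      rw [h, mul_zero] at hmul
      exact one_ne_zero hmul.symm
    have hp : p.coeff.support.Nonempty :=
      Finsupp.support_nonempty_iff.2 (mt AddMonoidAlgebra.coeff_eq_zero.1 hp0)
    have hq : q.coeff.support.Nonempty :=
      Finsupp.support_nonempty_iff.2 (mt AddMonoidAlgebra.coeff_eq_zero.1 hq0)
    have hmax : p.coeff.support.max' hp + q.coeff.support.max' hq = 0 := by
      have h1 : (p * q).coeff (p.coeff.support.max' hp + q.coeff.support.max' hq) ≠ 0 := by
        rw [laurent_mul_apply_max p q hp hq]
        exact mul_ne_zero (Finsupp.mem_support_iff.1 (p.coeff.support.max'_mem hp))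
          (Finsupp.mem_support_iff.1 (q.coeff.support.max'_mem hq))
      rw [hmul, AddMonoidAlgebra.one_def, AddMonoidAlgebra.coeff_single] at h1
      by_contra hne
      exact h1 (Finsupp.single_eq_of_ne' (Ne.symm hne))
    have hmin : p.coeff.support.min' hp + q.coeff.support.min' hq = 0 := by
      have h1 : (p * q).coeff (p.coeff.support.min' hp + q.coeff.support.min' hq) ≠ 0 := by
        rw [laurent_mul_apply_min p q hp hq]
        exact mul_ne_zero (Finsupp.mem_support_iff.1 (p.coeff.support.min'_mem hp))
          (Finsupp.mem_support_iff.1 (q.coeff.support.min'_mem hq))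
      rw [hmul, AddMonoidAlgebra.one_def, AddMonoidAlgebra.coeff_single] at h1
      by_contra hne
      exact h1 (Finsupp.single_eq_of_ne' (Ne.symm hne))
    have heq : p.coeff.support.max' hp = p.coeff.support.min' hp := by
      have h2 : p.coeff.support.max' hp + q.coeff.support.max' hq
          = p.coeff.support.min' hp + q.coeff.support.min' hq := hmax.trans hmin.symm
      have hle1 : p.coeff.support.min' hp ≤ p.coeff.support.max' hp :=
        Finset.min'_le _ _ (p.coeff.support.max'_mem hp)
      have hle2 : q.coeff.support.min' hq ≤ q.coeff.support.max' hq :=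
        Finset.min'_le _ _ (q.coeff.support.max'_mem hq)
      refine le_antisymm ?_ hle1
      have := h2.le.trans (add_le_add_left hle1 _)
      exact le_of_add_le_add_right (h2.le.trans (add_le_add_right hle2 _))
    have hsupp : p.coeff.support = {p.coeff.support.max' hp} := by
      apply Finset.eq_singleton_iff_unique_mem.2
      refine ⟨p.coeff.support.max'_mem hp, fun x hx => ?_⟩
      exact le_antisymm (Finset.le_max' _ x hx) (heq ▸ Finset.min'_le _ x hx)
    obtain ⟨hne, hf⟩ := Finsupp.support_eq_singleton.1 hsupp
    exact ⟨Units.mk0 _ hne, p.coeff.support.max' hp,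
      AddMonoidAlgebra.coeff_injective (hf.trans (AddMonoidAlgebra.coeff_single _ _).symm)⟩
  · rintro ⟨lam, c, rfl⟩
    refine IsUnit.of_mul_eq_one
      (AddMonoidAlgebra.single (-c) ((lam⁻¹ : Kˣ) : K)) ?_
    rw [AddMonoidAlgebra.single_mul_single, add_neg_cancel, Units.mul_inv,
      AddMonoidAlgebra.one_def]

theorem laurent_units (K : Type*) [Field K] (n : ℕ)
    (f : AddMonoidAlgebra K (Fin n → ℤ)) :
    IsUnit f ↔ ∃ (lam : Kˣ) (c : Fin n → ℤ),
      f = AddMonoidAlgebra.single c (lam : K) := by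
  have hwf : WellFoundedLT (Fin n) := inferInstance
  letI : LinearOrder (Lex (Fin n → ℤ)) :=
    @Pi.Lex.linearOrder (Fin n) (fun _ => ℤ) _ hwf _
  let e : (Fin n → ℤ) ≃+ Lex (Fin n → ℤ) :=
    { toEquiv := toLex, map_add' := fun _ _ => rfl }
  constructor
  · intro hf
    obtain ⟨lam, c, hc⟩ := (laurent_isUnit_iff_single _).1
      (hf.map (AddMonoidAlgebra.domCongr K K e))
    refine ⟨lam, e.symm c, ?_⟩
    have h2 := congrArg (AddMonoidAlgebra.domCongr K K e).symm hc
    rwa [AlgEquiv.symm_apply_apply, AddMonoidAlgebra.domCongr_symm,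
      AddMonoidAlgebra.domCongr_single] at h2
  · rintro ⟨lam, c, rfl⟩
    refine IsUnit.of_mul_eq_one
      (AddMonoidAlgebra.single (-c) ((lam⁻¹ : Kˣ) : K)) ?_
    rw [AddMonoidAlgebra.single_mul_single, add_neg_cancel, Units.mul_inv,
      AddMonoidAlgebra.one_def]
end
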